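/- (Bernstein inequality for martingales with unbounded increments.) Let (Y_i)_{1≤i≤n} be real random variables adapted to a filtration (F_i) with E[Y_i | F_{i-1}] = 0 a.s. for each i. Then for all t ≥ 0 and v, m > 0, P( |Σ_{i=1}^n Y_i| ≥ t, max_{i≤n} |Y_i| ≤ m, Σ_{i=1}^n E[Y_i² | F_{i-1}] ≤ v ) ≤ 2 exp( − t² / (2(v + t m / 3)) ). -/

import Mathlib

open MeasureTheory

lemma bern_exp_ineq (y : ℝ) : (1 - y/3) * (Real.exp y - 1 - y) ≤ y^2/2 := by
  set g : ℝ → ℝ := fun y => (1 - y/3) * (Real.exp y - 1 - y) - y^2/2 with hg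
  set g' : ℝ → ℝ := fun y => -(1/3)*(Real.exp y - 1 - y) + (1 - y/3)*(Real.exp y - 1) - y with hg'
  have hd : ∀ x, HasDerivAt g (g' x) x := by
    intro x
    have h1 : HasDerivAt (fun y : ℝ => 1 - y/3) (-(1/3)) x := by
      simpa using ((hasDerivAt_id x).div_const 3).const_sub 1
    have h2 : HasDerivAt (fun y : ℝ => Real.exp y - 1 - y) (Real.exp x - 1) x := by
      exact ((Real.hasDerivAt_exp x).sub_const 1).sub (hasDerivAt_id x)
    have h3 : HasDerivAt (fun y : ℝ => y^2/2) x x := by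
      simpa using ((hasDerivAt_pow 2 x).div_const 2)
    have := (h1.mul h2).sub h3
    exact this
  have hd' : ∀ x, HasDerivAt g' ((1/3)*((1-x)*Real.exp x - 1)) x := by
    intro x
    have h2 : HasDerivAt (fun y : ℝ => Real.exp y - 1 - y) (Real.exp x - 1) x := by
      exact ((Real.hasDerivAt_exp x).sub_const 1).sub (hasDerivAt_id x)
    have h1 : HasDerivAt (fun y : ℝ => 1 - y/3) (-(1/3)) x := by
      simpa using ((hasDerivAt_id x).div_const 3).const_sub 1
    have h4 : HasDerivAt (fun y : ℝ => (1 - y/3)*(Real.exp y - 1)) 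
        ((-(1/3))*(Real.exp x - 1) + (1 - x/3)*(Real.exp x)) x :=
      h1.mul ((Real.hasDerivAt_exp x).sub_const 1)
    have := ((h2.const_mul (-(1/3))).add h4).sub (hasDerivAt_id x)
    refine this.congr_deriv ?_
    ring
  have hsec : ∀ x, (1/3)*((1-x)*Real.exp x - 1) ≤ 0 := by
    intro x
    have h := Real.add_one_le_exp (-x)
    have := mul_le_mul_of_nonneg_right h (le_of_lt (Real.exp_pos x))
    rw [← Real.exp_add] at this
    simp at this
    nlinarith [Real.exp_pos x]
  have hanti : Antitone g' :=
    antitone_of_deriv_nonpos (fun x => (hd' x).differentiableAt)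
      (fun x => by rw [(hd' x).deriv]; exact hsec x)
  have hg'0 : g' 0 = 0 := by simp [hg']
  have key : g y ≤ g 0 := by
    rcases le_total y 0 with hy | hy
    · have hmono : MonotoneOn g (Set.Iic 0) := by
        apply monotoneOn_of_deriv_nonneg (convex_Iic 0)
          (fun x _ => (hd x).differentiableAt.continuousAt.continuousWithinAt)
          (fun x _ => (hd x).differentiableAt.differentiableWithinAt)
        intro x hx
        rw [(hd x).deriv]
        rw [interior_Iic] at hx
        have := hanti (le_of_lt hx)
        rw [hg'0] at this
        linarith
      exact hmono (Set.mem_Iic.2 hy) (Set.mem_Iic.2 le_rfl) hy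
    · have hmono : AntitoneOn g (Set.Ici 0) := by
        apply antitoneOn_of_deriv_nonpos (convex_Ici 0)
          (fun x _ => (hd x).differentiableAt.continuousAt.continuousWithinAt)
          (fun x _ => (hd x).differentiableAt.differentiableWithinAt)
        intro x hx
        rw [(hd x).deriv]
        rw [interior_Ici] at hx
        have := hanti (le_of_lt hx)
        rw [hg'0] at this
        linarith
      exact hmono (Set.mem_Ici.2 le_rfl) (Set.mem_Ici.2 hy) hy
  have : g 0 = 0 := by simp [hg]
  rw [this] at key
  simp only [hg] at key
  linarith


lemma icc_succ_forall (k : ℕ) (P : ℕ → Prop) :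
    (∀ i ∈ Finset.Icc 1 (k+1), P i) ↔ (∀ i ∈ Finset.Icc 1 k, P i) ∧ P (k+1) := by
  constructor
  · intro h
    exact ⟨fun i hi => h i (by simp at hi ⊢; omega), h _ (by simp)⟩
  · rintro ⟨h1, h2⟩ i hi
    simp at hi
    rcases Nat.lt_or_ge i (k+1) with h | h
    · exact h1 i (by simp; omega)
    · have : i = k+1 := by omega
      subst this; exact h2

set_option maxHeartbeats 1000000 in
lemma bern_onesided {Ω : Type*} {m0 : MeasurableSpace Ω} (μ : Measure Ω)
    [IsProbabilityMeasure μ] (ℱ : Filtration ℕ m0) (n : ℕ) (Y : ℕ → Ω → ℝ)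
    (hadap : ∀ i ∈ Finset.Icc 1 n, StronglyMeasurable[ℱ i] (Y i))
    (hint : ∀ i ∈ Finset.Icc 1 n, Integrable (Y i) μ)
    (hint2 : ∀ i ∈ Finset.Icc 1 n, Integrable (fun ω => (Y i ω) ^ 2) μ)
    (hmart : ∀ i ∈ Finset.Icc 1 n,
      MeasureTheory.condExp (ℱ (i - 1)) μ (Y i) =ᵐ[μ] fun _ => (0 : ℝ))
    (t v m : ℝ) (ht : 0 < t) (hv : 0 < v) (hm : 0 < m) :
    μ {ω | t ≤ ∑ i ∈ Finset.Icc 1 n, Y i ω ∧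
        (∀ i ∈ Finset.Icc 1 n, |Y i ω| ≤ m) ∧
        (∑ i ∈ Finset.Icc 1 n,
          MeasureTheory.condExp (ℱ (i - 1)) μ (fun ω' => (Y i ω') ^ 2) ω) ≤ v} ≤
      ENNReal.ofReal (Real.exp (-t ^ 2 / (2 * (v + t * m / 3)))) := by
  have hd : (0:ℝ) < v + t * m / 3 := by positivity
  set d : ℝ := v + t * m / 3 with hd_def
  set l : ℝ := t / d with hl_def
  have hl : 0 < l := by positivity
  set c : ℝ := d / (2 * v) with hc_def
  have hc0 : 0 < c := by positivity
  have hdne : d ≠ 0 := ne_of_gt hd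
  have hlm : l * m / 3 ≤ 1 - v / d := by
    have he : l * m / 3 + v / d = 1 := by
      rw [hl_def]
      field_simp
      rw [hd_def]; ring
    linarith
  have hvd : 0 < v / d := by positivity
  -- key pointwise exponential bounds
  have keyA : ∀ x : ℝ, |x| ≤ m → Real.exp (l * x) ≤ 1 + l * x + c * (l * x)^2 := by
    intro x hx
    have h1 := bern_exp_ineq (l * x)
    have hxm : x ≤ m := le_trans (le_abs_self x) hx
    have h2 : v / d ≤ 1 - l * x / 3 := by
      have : l * x ≤ l * m := by nlinarith
      nlinarith
    have h3 : 0 ≤ Real.exp (l * x) - 1 - l * x := by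
      have := Real.add_one_le_exp (l * x); linarith
    have h4 : (v/d) * (Real.exp (l*x) - 1 - l*x) ≤ (l*x)^2/2 := by nlinarith
    have h6 : Real.exp (l*x) - 1 - l*x ≤ c * (l*x)^2 := by
      have h7 := mul_le_mul_of_nonneg_left h4 (le_of_lt (by positivity : (0:ℝ) < 2*c))
      calc Real.exp (l*x) - 1 - l*x
          = (2*c) * ((v/d) * (Real.exp (l*x) - 1 - l*x)) := by
            rw [hc_def]; field_simp
        _ ≤ (2*c) * ((l*x)^2/2) := h7
        _ = c * (l*x)^2 := by ring
    linarith
  have hc2 : 1/2 ≤ c := by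
    rw [hc_def, le_div_iff₀ (by positivity), hd_def]; nlinarith
  have keyB : ∀ x : ℝ, 0 ≤ 1 + l * x + c * (l * x)^2 := by
    intro x
    nlinarith [sq_nonneg (1 + l*x), sq_nonneg (l*x)]
  -- definitions
  set S : ℕ → Ω → ℝ := fun k ω => ∑ i ∈ Finset.Icc 1 k, Y i ω with hS_def
  set V : ℕ → Ω → ℝ := fun k ω => ∑ i ∈ Finset.Icc 1 k,
      MeasureTheory.condExp (ℱ (i - 1)) μ (fun ω' => (Y i ω') ^ 2) ω with hV_def
  set A : ℕ → Set Ω := fun k => {ω | ∀ i ∈ Finset.Icc 1 k, |Y i ω| ≤ m} with hA_def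
  set G : ℕ → Ω → ℝ := fun k =>
    (A k).indicator (fun ω => Real.exp (l * S k ω - c * l^2 * V k ω)) with hG_def
  have hG_nonneg : ∀ k ω, 0 ≤ G k ω := by
    intro k ω
    exact Set.indicator_nonneg (fun ω' _ => (Real.exp_pos _).le) ω
  -- measurability
  have hYm : ∀ i, 1 ≤ i → i ≤ n → ∀ k, i ≤ k → StronglyMeasurable[ℱ k] (Y i) := by
    intro i h1 h2 k hik
    exact (hadap i (Finset.mem_Icc.2 ⟨h1, h2⟩)).mono (ℱ.mono hik)
  have hSmeas : ∀ k, k ≤ n → StronglyMeasurable[ℱ k] (S k) := by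
    intro k hk
    have heq : S k = ∑ i ∈ Finset.Icc 1 k, Y i := by
      funext ω; simp only [hS_def, Finset.sum_apply]
    rw [heq]
    apply Finset.stronglyMeasurable_sum
    intro i hi
    obtain ⟨hi1, hi2⟩ := Finset.mem_Icc.1 hi
    exact hYm i hi1 (by omega) k hi2
  have hVmeas : ∀ k j, k ≤ j + 1 → StronglyMeasurable[ℱ j] (V k) := by
    intro k j hk
    have heq : V k = ∑ i ∈ Finset.Icc 1 k,
        MeasureTheory.condExp (ℱ (i - 1)) μ (fun ω' => (Y i ω') ^ 2) := by
      funext ω; simp only [hV_def, Finset.sum_apply]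
    rw [heq]
    apply Finset.stronglyMeasurable_sum
    intro i hi
    obtain ⟨hi1, hi2⟩ := Finset.mem_Icc.1 hi
    exact stronglyMeasurable_condExp.mono (ℱ.mono (by omega))
  have hAmeas : ∀ k, k ≤ n → MeasurableSet[ℱ k] (A k) := by
    intro k hk
    have hrw : A k = ⋂ i ∈ Finset.Icc 1 k, {ω | |Y i ω| ≤ m} := by
      ext ω; simp only [hA_def, Set.mem_setOf_eq, Set.mem_iInter]
    rw [hrw]
    apply MeasurableSet.biInter (Set.to_countable _)
    intro i hi
    obtain ⟨hi1, hi2⟩ := Finset.mem_Icc.1 hi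
    have hYi := (hYm i hi1 (by omega) k hi2).measurable
    exact hYi (measurableSet_le measurable_abs measurable_const)
  have hGmeas : ∀ k, k ≤ n → StronglyMeasurable[ℱ k] (G k) := by
    intro k hk
    apply StronglyMeasurable.indicator _ (hAmeas k hk)
    exact Real.continuous_exp.comp_stronglyMeasurable
      (((hSmeas k hk).const_mul l).sub ((hVmeas k k (by omega)).const_mul (c * l^2)))
  -- a.e. nonnegativity of conditional variances
  have hW_nonneg : ∀ᵐ ω ∂μ, ∀ i ∈ Finset.Icc 1 n,
      0 ≤ MeasureTheory.condExp (ℱ (i - 1)) μ (fun ω' => (Y i ω') ^ 2) ω := by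
    rw [Filter.eventually_all_finset]
    intro i hi
    exact condExp_nonneg (ae_of_all _ fun ω' => sq_nonneg (Y i ω'))
  have hV_nonneg : ∀ k, k ≤ n → ∀ᵐ ω ∂μ, 0 ≤ V k ω := by
    intro k hk
    filter_upwards [hW_nonneg] with ω hω
    simp only [hV_def]
    apply Finset.sum_nonneg
    intro i hi
    obtain ⟨hi1, hi2⟩ := Finset.mem_Icc.1 hi
    exact hω i (Finset.mem_Icc.2 ⟨hi1, by omega⟩)
  have hSbound : ∀ k ω, ω ∈ A k → S k ω ≤ k * m := by
    intro k ω h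
    simp only [hS_def]
    calc ∑ i ∈ Finset.Icc 1 k, Y i ω ≤ ∑ i ∈ Finset.Icc 1 k, m := by
          apply Finset.sum_le_sum
          intro i hi
          exact le_trans (le_abs_self _) (h i hi)
      _ = (k : ℝ) * m := by
          rw [Finset.sum_const, Nat.card_Icc]
          simp
  have hG_bd : ∀ k, k ≤ n → ∀ᵐ ω ∂μ, ‖G k ω‖ ≤ Real.exp (l * k * m) := by
    intro k hk
    filter_upwards [hV_nonneg k hk] with ω hω
    rw [Real.norm_eq_abs, abs_of_nonneg (hG_nonneg k ω)]
    by_cases h : ω ∈ A k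
    · have hS := hSbound k ω h
      have hle : l * S k ω - c * l^2 * V k ω ≤ l * k * m := by
        nlinarith [mul_le_mul_of_nonneg_left hS hl.le,
          mul_nonneg (mul_nonneg hc0.le (sq_nonneg l)) hω]
      simp only [hG_def]
      rw [Set.indicator_of_mem h]
      exact Real.exp_le_exp.2 hle
    · simp only [hG_def]
      rw [Set.indicator_of_notMem h]
      exact (Real.exp_pos _).le
  have hGint : ∀ k, k ≤ n → Integrable (G k) μ := by
    intro k hk
    exact Integrable.mono' (integrable_const (Real.exp (l * k * m)))
      ((hGmeas k hk).mono (ℱ.le k)).aestronglyMeasurable (hG_bd k hk)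
  -- the martingale induction
  have claim : ∀ k, k ≤ n → ∫ ω, G k ω ∂μ ≤ 1 := by
    intro k
    induction k with
    | zero =>
      intro _
      have hicc : Finset.Icc 1 0 = (∅ : Finset ℕ) := Finset.Icc_eq_empty (by omega)
      have hA0 : A 0 = Set.univ := by
        ext ω
        simp only [hA_def, hicc, Set.mem_setOf_eq, Set.mem_univ, iff_true]
        intro i hi
        simp at hi
      have h1 : ∀ ω, G 0 ω = 1 := by
        intro ω
        simp only [hG_def, hA0, Set.indicator_univ, hS_def, hV_def, hicc,
          Finset.sum_empty]
        norm_num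
      rw [integral_congr_ae (ae_of_all _ h1)]
      simp
    | succ k ih =>
      intro hk1
      have hkn : k ≤ n := by omega
      have hkmem : k + 1 ∈ Finset.Icc 1 n := Finset.mem_Icc.2 ⟨by omega, by omega⟩
      set W : Ω → ℝ :=
        MeasureTheory.condExp (ℱ k) μ (fun ω' => (Y (k+1) ω') ^ 2) with hW_def
      have hVsplit : ∀ ω, V (k+1) ω = V k ω + W ω := by
        intro ω
        simp only [hV_def]
        exact Finset.sum_Icc_succ_top (by omega : 1 ≤ k + 1) _
      have hSsplit : ∀ ω, S (k+1) ω = S k ω + Y (k+1) ω := by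
        intro ω
        simp only [hS_def]
        exact Finset.sum_Icc_succ_top (by omega) _
      have hAsplit : ∀ ω, ω ∈ A (k+1) ↔ ω ∈ A k ∧ |Y (k+1) ω| ≤ m := by
        intro ω
        have h := icc_succ_forall k (fun i => |Y i ω| ≤ m)
        constructor
        · intro hh; exact ⟨(h.1 hh).1, (h.1 hh).2⟩
        · intro hh; exact h.2 ⟨hh.1, hh.2⟩
      set f : Ω → ℝ :=
        (A k).indicator (fun ω => Real.exp (l * S k ω - c * l^2 * V (k+1) ω)) with hf_def
      set g : Ω → ℝ := fun ω => 1 + l * Y (k+1) ω + c * l^2 * (Y (k+1) ω)^2 with hg_def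
      have hf_nonneg : ∀ ω, 0 ≤ f ω :=
        fun ω => Set.indicator_nonneg (fun ω' _ => (Real.exp_pos _).le) ω
      have hg_eval : ∀ ω, g ω = 1 + l * Y (k+1) ω + c * l^2 * (Y (k+1) ω)^2 :=
        fun ω => rfl
      have hg_nonneg : ∀ ω, 0 ≤ g ω := by
        intro ω
        have hB := keyB (Y (k+1) ω)
        rw [hg_eval]
        nlinarith [sq_nonneg (l * Y (k+1) ω)]
      -- pointwise: G (k+1) ≤ f * g
      have hstep1 : ∀ ω, G (k+1) ω ≤ f ω * g ω := by
        intro ω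
        by_cases hA1 : ω ∈ A (k+1)
        · obtain ⟨hAk, hYb⟩ := (hAsplit ω).1 hA1
          have hexp : Real.exp (l * Y (k+1) ω) ≤ g ω := by
            have hkA := keyA (Y (k+1) ω) hYb
            rw [hg_eval]
            nlinarith
          have heq : G (k+1) ω = f ω * Real.exp (l * Y (k+1) ω) := by
            simp only [hG_def, hf_def]
            rw [Set.indicator_of_mem hA1, Set.indicator_of_mem hAk, ← Real.exp_add]
            congr 1
            rw [hSsplit ω]
            ring
          rw [heq]
          exact mul_le_mul_of_nonneg_left hexp (hf_nonneg ω)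
        · have hz : G (k+1) ω = 0 := by
            simp only [hG_def]
            rw [Set.indicator_of_notMem hA1]
          rw [hz]
          exact mul_nonneg (hf_nonneg ω) (hg_nonneg ω)
      -- measurability / integrability of f, g
      have hfmeas : StronglyMeasurable[ℱ k] f := by
        apply StronglyMeasurable.indicator _ (hAmeas k hkn)
        exact Real.continuous_exp.comp_stronglyMeasurable
          (((hSmeas k hkn).const_mul l).sub ((hVmeas (k+1) k (by omega)).const_mul (c * l^2)))
      have hf_bd : ∀ᵐ ω ∂μ, ‖f ω‖ ≤ Real.exp (l * k * m) := by
        filter_upwards [hV_nonneg (k+1) hk1] with ω hω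
        rw [Real.norm_eq_abs, abs_of_nonneg (hf_nonneg ω)]
        by_cases h : ω ∈ A k
        · have hS := hSbound k ω h
          have hle : l * S k ω - c * l^2 * V (k+1) ω ≤ l * k * m := by
            nlinarith [mul_le_mul_of_nonneg_left hS hl.le,
              mul_nonneg (mul_nonneg hc0.le (sq_nonneg l)) hω]
          simp only [hf_def]
          rw [Set.indicator_of_mem h]
          exact Real.exp_le_exp.2 hle
        · simp only [hf_def]
          rw [Set.indicator_of_notMem h]
          exact (Real.exp_pos _).le
      have hgint : Integrable g μ := by
        have h1 : Integrable (fun ω => l * Y (k+1) ω) μ := (hint _ hkmem).const_mul l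
        have h2 : Integrable (fun ω => c * l^2 * (Y (k+1) ω)^2) μ :=
          (hint2 _ hkmem).const_mul (c * l^2)
        exact ((integrable_const (1:ℝ)).add h1).add h2
      have hfg_int : Integrable (fun ω => f ω * g ω) μ :=
        Integrable.bdd_mul hgint ((hfmeas.mono (ℱ.le k)).aestronglyMeasurable) hf_bd
      have hstep3 : ∫ ω, G (k+1) ω ∂μ ≤ ∫ ω, f ω * g ω ∂μ :=
        integral_mono (hGint (k+1) hk1) hfg_int hstep1
      -- pull-out property
      have hpull : μ[f * g | ℱ k] =ᵐ[μ] f * μ[g | ℱ k] :=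
        condExp_mul_of_stronglyMeasurable_left hfmeas hfg_int hgint
      have hstep4 : ∫ ω, f ω * g ω ∂μ = ∫ ω, f ω * (μ[g | ℱ k]) ω ∂μ := by
        have h1 : ∫ ω, f ω * g ω ∂μ = ∫ ω, (f * g) ω ∂μ := rfl
        rw [h1, ← integral_condExp (ℱ.le k)]
        exact integral_congr_ae hpull
      -- compute condExp of g
      have hmg : μ[g | ℱ k] =ᵐ[μ] fun ω => 1 + c * l^2 * W ω := by
        have hgeq : g = ((fun _ => (1:ℝ)) + fun ω => l * Y (k+1) ω)
            + (fun ω => c * l^2 * (Y (k+1) ω)^2) := by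
          funext ω; simp only [hg_def, Pi.add_apply]
        rw [hgeq]
        have h1 : Integrable ((fun _ => (1:ℝ)) + fun ω => l * Y (k+1) ω) μ :=
          (integrable_const 1).add ((hint _ hkmem).const_mul l)
        have h2 : Integrable (fun ω => c * l^2 * (Y (k+1) ω)^2) μ :=
          (hint2 _ hkmem).const_mul (c * l^2)
        refine (condExp_add h1 h2 _).trans ?_
        have h3 := condExp_add (μ := μ) (m := ℱ k) (integrable_const (1:ℝ))
          ((hint _ hkmem).const_mul l)
        have h4 : μ[fun ω => l * Y (k+1) ω | ℱ k] =ᵐ[μ] fun _ => (0:ℝ) := by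
          have hsmul : (fun ω => l * Y (k+1) ω) = l • (Y (k+1)) := by
            funext ω; simp
          rw [hsmul]
          refine (condExp_smul l (Y (k+1)) _).trans ?_
          have hm0 := hmart _ hkmem
          simp only [Nat.add_sub_cancel] at hm0
          filter_upwards [hm0] with ω hω
          simp [hω]
        have h5 : μ[fun ω => c * l^2 * (Y (k+1) ω)^2 | ℱ k] =ᵐ[μ] fun ω => c * l^2 * W ω := by
          have hsmul : (fun ω => c * l^2 * (Y (k+1) ω)^2)
              = (c * l^2) • (fun ω => (Y (k+1) ω)^2) := by
            funext ω; simp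
          rw [hsmul]
          refine (condExp_smul (c * l^2) _ _).trans ?_
          filter_upwards with ω
          simp only [hW_def, Pi.smul_apply, smul_eq_mul]
        have h6 : μ[(fun _ => (1:ℝ)) | ℱ k] = fun _ => (1:ℝ) := condExp_const (ℱ.le k) 1
        filter_upwards [h3, h4, h5] with ω e3 e4 e5
        simp only [Pi.add_apply] at e3 ⊢
        rw [e5, e3, e4, h6]
        ring
      -- a.e. bound  f * μ[g|ℱ k] ≤ G k
      have hstep6 : ∀ᵐ ω ∂μ, f ω * (μ[g | ℱ k]) ω ≤ G k ω := by
        filter_upwards [hmg] with ω hω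
        rw [hω]
        have hee : 1 + c * l^2 * W ω ≤ Real.exp (c * l^2 * W ω) := by
          have := Real.add_one_le_exp (c * l^2 * W ω); linarith
        calc f ω * (1 + c * l^2 * W ω) ≤ f ω * Real.exp (c * l^2 * W ω) :=
              mul_le_mul_of_nonneg_left hee (hf_nonneg ω)
          _ ≤ G k ω := by
              by_cases h : ω ∈ A k
              · simp only [hf_def, hG_def]
                rw [Set.indicator_of_mem h, Set.indicator_of_mem h, ← Real.exp_add]
                apply Real.exp_le_exp.2
                rw [hVsplit ω]
                ring_nf
                exact le_rfl
              · simp only [hf_def, hG_def]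
                rw [Set.indicator_of_notMem h, Set.indicator_of_notMem h]
                simp
      have hlhs_int : Integrable (fun ω => f ω * (μ[g | ℱ k]) ω) μ := by
        have hic : Integrable (μ[f * g | ℱ k]) μ := integrable_condExp
        exact hic.congr hpull
      have hstep7 : ∫ ω, f ω * (μ[g | ℱ k]) ω ∂μ ≤ ∫ ω, G k ω ∂μ :=
        integral_mono_ae hlhs_int (hGint k hkn) hstep6
      calc ∫ ω, G (k+1) ω ∂μ ≤ ∫ ω, f ω * g ω ∂μ := hstep3
        _ = ∫ ω, f ω * (μ[g | ℱ k]) ω ∂μ := hstep4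
        _ ≤ ∫ ω, G k ω ∂μ := hstep7
        _ ≤ 1 := ih hkn
  -- conclusion via Markov
  set a : ℝ := Real.exp (l * t - c * l^2 * v) with ha_def
  have ha_pos : 0 < a := Real.exp_pos _
  have hsub : {ω | t ≤ ∑ i ∈ Finset.Icc 1 n, Y i ω ∧
      (∀ i ∈ Finset.Icc 1 n, |Y i ω| ≤ m) ∧
      (∑ i ∈ Finset.Icc 1 n,
        MeasureTheory.condExp (ℱ (i - 1)) μ (fun ω' => (Y i ω') ^ 2) ω) ≤ v}
      ⊆ {ω | a ≤ G n ω} := by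
    intro ω hω
    obtain ⟨h1, h2, h3⟩ := hω
    have hmem : ω ∈ A n := h2
    have hGn : G n ω = Real.exp (l * S n ω - c * l^2 * V n ω) := by
      simp only [hG_def]
      rw [Set.indicator_of_mem hmem]
    rw [Set.mem_setOf_eq, hGn, ha_def]
    apply Real.exp_le_exp.2
    have hS : t ≤ S n ω := h1
    have hV : V n ω ≤ v := h3
    nlinarith [mul_le_mul_of_nonneg_left hS hl.le,
      mul_le_mul_of_nonneg_left hV (by positivity : (0:ℝ) ≤ c * l^2)]
  have hmarkov := mul_meas_ge_le_integral_of_nonneg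
    (ae_of_all μ (hG_nonneg n)) (hGint n le_rfl) a
  have hfin : μ {ω | a ≤ G n ω} ≠ ⊤ := measure_ne_top μ _
  have htoReal : (μ {ω | a ≤ G n ω}).toReal ≤ 1 / a := by
    rw [le_div_iff₀ ha_pos, mul_comm]
    exact le_trans hmarkov (claim n le_rfl)
  have hfinal : μ {ω | a ≤ G n ω} ≤ ENNReal.ofReal (1 / a) := by
    rw [← ENNReal.ofReal_toReal hfin]
    exact ENNReal.ofReal_le_ofReal htoReal
  refine le_trans (measure_mono hsub) (le_trans hfinal ?_)
  apply ENNReal.ofReal_le_ofReal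
  rw [one_div, ha_def, ← Real.exp_neg]
  apply Real.exp_le_exp.2
  have hcalc : l * t - c * l^2 * v = t^2 / (2 * d) := by
    rw [hl_def, hc_def]
    field_simp
    ring
  rw [neg_div, hcalc]
  

/-- Bernstein inequality for martingale differences with unbounded increments:
if `E[Y_i | ℱ_{i-1}] = 0`, then
`P(|∑ Y_i| ≥ t, max|Y_i| ≤ m, ∑ E[Y_i²|ℱ_{i-1}] ≤ v) ≤ 2 exp(−t²/(2(v + tm/3)))`. -/
theorem stmt_5 {Ω : Type*} {m0 : MeasurableSpace Ω} (μ : Measure Ω)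
    [IsProbabilityMeasure μ] (ℱ : Filtration ℕ m0) (n : ℕ) (Y : ℕ → Ω → ℝ)
    (hadap : ∀ i ∈ Finset.Icc 1 n, StronglyMeasurable[ℱ i] (Y i))
    (hint : ∀ i ∈ Finset.Icc 1 n, Integrable (Y i) μ)
    (hint2 : ∀ i ∈ Finset.Icc 1 n, Integrable (fun ω => (Y i ω) ^ 2) μ)
    (hmart : ∀ i ∈ Finset.Icc 1 n,
      MeasureTheory.condExp (ℱ (i - 1)) μ (Y i) =ᵐ[μ] fun _ => (0 : ℝ))
    (t v m : ℝ) (ht : 0 ≤ t) (hv : 0 < v) (hm : 0 < m) :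
    μ {ω | t ≤ |∑ i ∈ Finset.Icc 1 n, Y i ω| ∧
        (∀ i ∈ Finset.Icc 1 n, |Y i ω| ≤ m) ∧
        (∑ i ∈ Finset.Icc 1 n,
          MeasureTheory.condExp (ℱ (i - 1)) μ (fun ω' => (Y i ω') ^ 2) ω) ≤ v} ≤
      ENNReal.ofReal (2 * Real.exp (-t ^ 2 / (2 * (v + t * m / 3)))) := by
  rcases eq_or_lt_of_le ht with ht0 | ht'
  · -- t = 0 : trivial bound
    have h2 : (2 : ℝ) * Real.exp (-t ^ 2 / (2 * (v + t * m / 3))) = 2 := by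
      rw [← ht0]
      norm_num
    rw [h2]
    calc μ _ ≤ 1 := prob_le_one
      _ ≤ ENNReal.ofReal 2 := by
          rw [show (1 : ENNReal) = ENNReal.ofReal 1 by simp]
          exact ENNReal.ofReal_le_ofReal (by norm_num)
  · -- t > 0
    set Z : ℕ → Ω → ℝ := fun i => -Y i with hZ_def
    have hadapZ : ∀ i ∈ Finset.Icc 1 n, StronglyMeasurable[ℱ i] (Z i) :=
      fun i hi => (hadap i hi).neg
    have hintZ : ∀ i ∈ Finset.Icc 1 n, Integrable (Z i) μ := fun i hi => (hint i hi).neg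
    have hsqZ : ∀ i, (fun ω => (Z i ω) ^ 2) = fun ω => (Y i ω) ^ 2 := by
      intro i; funext ω; simp [hZ_def]
    have hint2Z : ∀ i ∈ Finset.Icc 1 n, Integrable (fun ω => (Z i ω) ^ 2) μ := by
      intro i hi; rw [hsqZ i]; exact hint2 i hi
    have hmartZ : ∀ i ∈ Finset.Icc 1 n,
        MeasureTheory.condExp (ℱ (i - 1)) μ (Z i) =ᵐ[μ] fun _ => (0 : ℝ) := by
      intro i hi
      refine (condExp_neg (Y i) _).trans ?_
      filter_upwards [hmart i hi] with ω hω
      simp [hω]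
    have hP := bern_onesided μ ℱ n Y hadap hint hint2 hmart t v m ht' hv hm
    have hQ := bern_onesided μ ℱ n Z hadapZ hintZ hint2Z hmartZ t v m ht' hv hm
    have hceq : ∀ i, MeasureTheory.condExp (ℱ (i - 1)) μ (fun ω' => (Z i ω') ^ 2)
        = MeasureTheory.condExp (ℱ (i - 1)) μ (fun ω' => (Y i ω') ^ 2) := by
      intro i; rw [hsqZ i]
    have hsub : {ω | t ≤ |∑ i ∈ Finset.Icc 1 n, Y i ω| ∧
        (∀ i ∈ Finset.Icc 1 n, |Y i ω| ≤ m) ∧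
        (∑ i ∈ Finset.Icc 1 n,
          MeasureTheory.condExp (ℱ (i - 1)) μ (fun ω' => (Y i ω') ^ 2) ω) ≤ v}
        ⊆ {ω | t ≤ ∑ i ∈ Finset.Icc 1 n, Y i ω ∧
            (∀ i ∈ Finset.Icc 1 n, |Y i ω| ≤ m) ∧
            (∑ i ∈ Finset.Icc 1 n,
              MeasureTheory.condExp (ℱ (i - 1)) μ (fun ω' => (Y i ω') ^ 2) ω) ≤ v}
          ∪ {ω | t ≤ ∑ i ∈ Finset.Icc 1 n, Z i ω ∧
            (∀ i ∈ Finset.Icc 1 n, |Z i ω| ≤ m) ∧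
            (∑ i ∈ Finset.Icc 1 n,
              MeasureTheory.condExp (ℱ (i - 1)) μ (fun ω' => (Z i ω') ^ 2) ω) ≤ v} := by
      intro ω hω
      obtain ⟨h1, h2, h3⟩ := hω
      rcases le_abs.1 h1 with h | h
      · left; exact ⟨h, h2, h3⟩
      · right
        refine ⟨?_, ?_, ?_⟩
        · rw [show ∑ i ∈ Finset.Icc 1 n, Z i ω = -∑ i ∈ Finset.Icc 1 n, Y i ω by
            simp [hZ_def]]
          exact h
        · intro i hi
          simpa [hZ_def] using h2 i hi
        · simpa only [hceq] using h3
    calc μ _ ≤ μ (_ ∪ _) := measure_mono hsub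
      _ ≤ μ _ + μ _ := measure_union_le _ _
      _ ≤ ENNReal.ofReal (Real.exp (-t ^ 2 / (2 * (v + t * m / 3))))
          + ENNReal.ofReal (Real.exp (-t ^ 2 / (2 * (v + t * m / 3)))) := add_le_add hP hQ
      _ = ENNReal.ofReal (2 * Real.exp (-t ^ 2 / (2 * (v + t * m / 3)))) := by
          rw [← ENNReal.ofReal_add (Real.exp_nonneg _) (Real.exp_nonneg _)]
          ring_nf
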